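/- The map sending x to the sequence i ↦ x i − m(x), where m(x) is the minimum entry of x, followed by dividing every entry by the GCD of the resulting entries, is injective on any set S of q-ary sequences satisfying Properties A and B, and its image is contained in P_{q,n}. -/
import Mathlib


/-- `P_{q,n}`: q-ary sequences (`Fin n → ℕ`, entries `≤ q-1`) with minimum
entry 0, positive maximum entry, and gcd of entries equal to 1. -/
def PearsonSet (q n : ℕ) : Set (Fin n → ℕ) :=
  {x | (∀ i, x i ≤ q - 1) ∧ (∃ i, x i = 0) ∧ (∃ i, 0 < x i) ∧
       Finset.univ.gcd x = 1}

/-- The normalization map: subtract the minimum entry, then divide every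
entry by the gcd of the resulting entries. -/
noncomputable def normalizeSeq (n : ℕ) (hn : 2 ≤ n) (x : Fin n → ℕ) : Fin n → ℕ :=
  fun i =>
    (x i - Finset.univ.inf' (Finset.univ_nonempty_iff.mpr ⟨⟨0, by omega⟩⟩) x) /
      Finset.univ.gcd
        (fun j => x j - Finset.univ.inf' (Finset.univ_nonempty_iff.mpr ⟨⟨0, by omega⟩⟩) x)

/-- On any set `S` of q-ary sequences satisfying Properties A and B, the
normalization map (shift so the minimum becomes 0, then divide by the gcd)
is injective, and its image is contained in `P_{q,n}`. -/
theorem stmt_7 (q n : ℕ) (hq : 2 ≤ q) (hn : 2 ≤ n)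
    (S : Set (Fin n → ℕ)) (hSq : ∀ x ∈ S, ∀ i, x i ≤ q - 1)
    (hA : ∀ x ∈ S, ∀ y ∈ S, ∀ c₁ c₂ : ℝ, 0 < c₂ → (c₁, c₂) ≠ (0, 1) →
        (fun i => c₁ + c₂ * (x i : ℝ)) ≠ (fun i => (y i : ℝ)))
    (hB : ∀ c : ℕ, (fun _ : Fin n => c) ∉ S) :
    Set.InjOn (normalizeSeq n hn) S ∧ ∀ x ∈ S, normalizeSeq n hn x ∈ PearsonSet q n := by
  classical
  have hne : (Finset.univ : Finset (Fin n)).Nonempty := Finset.univ_nonempty_iff.mpr ⟨⟨0, by omega⟩⟩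
  set M : (Fin n → ℕ) → ℕ := fun x => Finset.univ.inf' hne x with hM
  set G : (Fin n → ℕ) → ℕ := fun x => Finset.univ.gcd (fun j => x j - M x) with hG
  have hnorm : ∀ x, normalizeSeq n hn x = fun i => (x i - M x) / G x := fun x => rfl
  have hMle : ∀ x : Fin n → ℕ, ∀ i, M x ≤ x i := fun x i => Finset.inf'_le x (Finset.mem_univ i)
  have hMmem : ∀ x : Fin n → ℕ, ∃ i, x i = M x := by
    intro x
    obtain ⟨i, _, h⟩ := Finset.exists_mem_eq_inf' hne x
    exact ⟨i, h.symm⟩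
  have hGdvd : ∀ x : Fin n → ℕ, ∀ i, G x ∣ x i - M x := fun x i =>
    Finset.gcd_dvd (Finset.mem_univ i)
  have hSnc : ∀ x ∈ S, ∃ i, M x < x i := by
    intro x hx
    by_contra h
    push_neg at h
    have hc : ∀ i, x i = M x := fun i => le_antisymm (h i) (hMle x i)
    exact hB (M x) (by rw [show (fun _ : Fin n => M x) = x from funext fun i => (hc i).symm]; exact hx)
  have hGpos : ∀ x ∈ S, 0 < G x := by
    intro x hx
    obtain ⟨i, hi⟩ := hSnc x hx
    rcases Nat.eq_zero_or_pos (G x) with h0 | h0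
    · have := hGdvd x i
      rw [h0] at this
      simp only [zero_dvd_iff] at this
      omega
    · exact h0
  have hmem : ∀ x ∈ S, normalizeSeq n hn x ∈ PearsonSet q n := by
    intro x hx
    rw [hnorm]
    obtain ⟨i0, hi0⟩ := hMmem x
    obtain ⟨i1, hi1⟩ := hSnc x hx
    have gpos := hGpos x hx
    refine ⟨fun i => ?_, ⟨i0, by simp [hi0]⟩, ⟨i1, ?_⟩, ?_⟩
    · show (x i - M x) / G x ≤ q - 1
      have h1 := hSq x hx i
      have h2 := Nat.div_le_self (x i - M x) (G x)
      omega
    · exact Nat.div_pos (Nat.le_of_dvd (by omega) (hGdvd x i1)) gpos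
    · exact Finset.gcd_div_eq_one (Finset.mem_univ i1) (by omega)
  refine ⟨?_, hmem⟩
  intro x hx y hy hxy
  rw [hnorm x, hnorm y] at hxy
  have hz : ∀ i, (x i - M x) / G x = (y i - M y) / G y := fun i => congrFun hxy i
  have hxe : ∀ i, x i = M x + G x * ((x i - M x) / G x) := by
    intro i
    have := Nat.mul_div_cancel' (hGdvd x i)
    have := hMle x i
    omega
  have hye : ∀ i, y i = M y + G y * ((x i - M x) / G x) := by
    intro i
    rw [hz i]
    have := Nat.mul_div_cancel' (hGdvd y i)
    have := hMle y i
    omega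
  have hgx : (0:ℝ) < (G x : ℝ) := by exact_mod_cast hGpos x hx
  have hgy : (0:ℝ) < (G y : ℝ) := by exact_mod_cast hGpos y hy
  have heq : (fun i => ((M y : ℝ) - ((G y : ℝ)/(G x : ℝ)) * (M x : ℝ))
      + ((G y : ℝ)/(G x : ℝ)) * (x i : ℝ)) = fun i => (y i : ℝ) := by
    funext i
    have h1 : (x i : ℝ) = (M x : ℝ) + (G x : ℝ) * (((x i - M x) / G x : ℕ) : ℝ) := by
      exact_mod_cast congrArg (Nat.cast : ℕ → ℝ) (hxe i)
    have h2 : (y i : ℝ) = (M y : ℝ) + (G y : ℝ) * (((x i - M x) / G x : ℕ) : ℝ) := by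
      exact_mod_cast congrArg (Nat.cast : ℕ → ℝ) (hye i)
    rw [h1, h2]
    field_simp
    ring
  rcases eq_or_ne (((M y : ℝ) - ((G y : ℝ)/(G x : ℝ)) * (M x : ℝ), (G y : ℝ)/(G x : ℝ)))
      ((0:ℝ), (1:ℝ)) with hp | hp
  · have hc₁ : (M y : ℝ) - ((G y : ℝ)/(G x : ℝ)) * (M x : ℝ) = 0 := congrArg Prod.fst hp
    have hc₂ : (G y : ℝ)/(G x : ℝ) = 1 := congrArg Prod.snd hp
    funext i
    have h3 := congrFun heq i
    rw [hc₂] at h3 hc₁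
    rw [hc₁] at h3
    have : (x i : ℝ) = (y i : ℝ) := by linarith
    exact_mod_cast this
  · exact absurd heq (hA x hx y hy _ _ (div_pos hgy hgx) hp)
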